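/- Let σ > 0, ν ∈ ℂ, and let φ ∈ L²((−1,1); ℝ) be real-valued and satisfy ∫_{-1}^{1} e^{i σ s t} φ(s) ds = ν φ(t) for almost every t ∈ (−1,1). Then ∫_{-1}^{1} S_σ(t−s) φ(s) ds = (σ |ν|² / (2π)) φ(t) for almost every t ∈ (−1,1). -/

import Mathlib

open MeasureTheory Real Complex

/-- The sinc kernel S_σ(u) = sin(σu)/(πu), with the removable-singularity value σ/π at u = 0. -/
noncomputable def sincK (σ : ℝ) (u : ℝ) : ℝ :=
  if u = 0 then σ / Real.pi else Real.sin (σ * u) / (Real.pi * u)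

lemma sincK_even (σ a : ℝ) : sincK σ (-a) = sincK σ a := by
  unfold sincK
  rcases eq_or_ne a 0 with rfl | ha
  · simp
  · rw [if_neg (neg_ne_zero.mpr ha), if_neg ha, mul_neg, Real.sin_neg, mul_neg,
      neg_div_neg_eq]

lemma interval_to_Ioo (f : ℝ → ℂ) :
    (∫ s in (-1:ℝ)..1, f s) = ∫ s in Set.Ioo (-1:ℝ) 1, f s := by
  rw [intervalIntegral.integral_of_le (by norm_num), integral_Ioc_eq_integral_Ioo]

lemma interval_to_Ioo' (f : ℝ → ℝ) :
    (∫ s in (-1:ℝ)..1, f s) = ∫ s in Set.Ioo (-1:ℝ) 1, f s := by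
  rw [intervalIntegral.integral_of_le (by norm_num), integral_Ioc_eq_integral_Ioo]

lemma exp_int (σ : ℝ) (hσ : 0 < σ) (a : ℝ) :
    (∫ u in Set.Ioo (-1:ℝ) 1, Complex.exp (Complex.I * σ * u * a)) =
      ((2 * Real.pi / σ * sincK σ a : ℝ) : ℂ) := by
  have hσ' : (σ:ℂ) ≠ 0 := by exact_mod_cast hσ.ne'
  have hπ : (Real.pi : ℂ) ≠ 0 := by exact_mod_cast Real.pi_ne_zero
  rw [← interval_to_Ioo]
  rcases eq_or_ne a 0 with rfl | ha
  · simp [sincK, Complex.ofReal_div]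
    field_simp
    ring
  · have ha' : (a:ℂ) ≠ 0 := by exact_mod_cast ha
    have hc : (Complex.I * σ * a) ≠ 0 := by
      simp [Complex.I_ne_zero, hσ.ne', ha, Complex.ofReal_ne_zero]
    have h1 : ∀ u : ℝ, Complex.I * σ * u * a = (Complex.I * σ * a) * u := by
      intro u; ring
    simp only [h1]
    rw [integral_exp_mul_complex hc]
    have e1 : Complex.I * ↑σ * ↑a * (((1:ℝ)):ℂ) = ((σ * a : ℝ) : ℂ) * Complex.I := by
      push_cast; ring
    have e2 : Complex.I * ↑σ * ↑a * (((-1:ℝ)):ℂ) = -(((σ * a : ℝ) : ℂ)) * Complex.I := by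
      push_cast; ring
    rw [e1, e2, Complex.exp_mul_I, Complex.exp_mul_I, Complex.cos_neg, Complex.sin_neg]
    have h2 : (Complex.cos ((σ*a:ℝ):ℂ) + Complex.sin ((σ*a:ℝ):ℂ) * Complex.I) -
        (Complex.cos ((σ*a:ℝ):ℂ) + -Complex.sin ((σ*a:ℝ):ℂ) * Complex.I)
        = 2 * Complex.sin ((σ*a:ℝ):ℂ) * Complex.I := by ring
    rw [h2, ← Complex.ofReal_sin]
    unfold sincK
    rw [if_neg ha, div_eq_iff hc]
    push_cast
    field_simp

theorem sinc_eigen_of_fourier_eigen (σ : ℝ) (hσ : 0 < σ) (ν : ℂ) (φ : ℝ → ℝ)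
    (hφ : MemLp φ 2 (volume.restrict (Set.Ioo (-1:ℝ) 1)))
    (heig : ∀ᵐ (t : ℝ) ∂(volume.restrict (Set.Ioo (-1:ℝ) 1)),
      (∫ s in (-1:ℝ)..1, Complex.exp (Complex.I * σ * s * (t : ℂ)) * (φ s : ℂ)) = ν * (φ t : ℂ)) :
    ∀ᵐ (t : ℝ) ∂(volume.restrict (Set.Ioo (-1:ℝ) 1)),
      (∫ s in (-1:ℝ)..1, sincK σ (t - s) * φ s)
        = σ * ‖ν‖ ^ 2 / (2 * Real.pi) * φ t := by
  haveI : IsFiniteMeasure (volume.restrict (Set.Ioo (-1:ℝ) 1)) := by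
    constructor
    rw [Measure.restrict_apply_univ, Real.volume_Ioo]
    exact ENNReal.ofReal_lt_top
  have hInt : Integrable φ (volume.restrict (Set.Ioo (-1:ℝ) 1)) :=
    memLp_one_iff_integrable.mp (hφ.mono_exponent (by norm_num))
  have hφm : AEStronglyMeasurable φ (volume.restrict (Set.Ioo (-1:ℝ) 1)) := hφ.1
  have heig' : ∀ᵐ (u : ℝ) ∂(volume.restrict (Set.Ioo (-1:ℝ) 1)),
      (∫ s in Set.Ioo (-1:ℝ) 1, Complex.exp (Complex.I * σ * s * (u:ℂ)) * (φ s : ℂ))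
        = ν * φ u := by
    filter_upwards [heig] with u hu
    rw [← interval_to_Ioo]; exact hu
  have hconj : ∀ᵐ (t : ℝ) ∂(volume.restrict (Set.Ioo (-1:ℝ) 1)),
      (∫ s in Set.Ioo (-1:ℝ) 1, Complex.exp (-Complex.I * σ * s * (t:ℂ)) * (φ s : ℂ))
        = (starRingEnd ℂ) ν * φ t := by
    filter_upwards [heig'] with t ht
    have h := congrArg (starRingEnd ℂ) ht
    rw [← integral_conj] at h
    simpa [map_mul, Complex.conj_ofReal, ← Complex.exp_conj, Complex.conj_I, neg_mul] using h
  -- step 1: spectral computation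
  have hA2 : ∀ᵐ (t : ℝ) ∂(volume.restrict (Set.Ioo (-1:ℝ) 1)),
      (∫ u in Set.Ioo (-1:ℝ) 1, Complex.exp (-Complex.I * σ * u * (t:ℂ)) *
        (∫ s in Set.Ioo (-1:ℝ) 1, Complex.exp (Complex.I * σ * s * (u:ℂ)) * (φ s : ℂ)))
        = ((‖ν‖ ^ 2 : ℝ) : ℂ) * φ t := by
    filter_upwards [hconj] with t ht
    have h1 : (∫ u in Set.Ioo (-1:ℝ) 1, Complex.exp (-Complex.I * σ * u * (t:ℂ)) *
        (∫ s in Set.Ioo (-1:ℝ) 1, Complex.exp (Complex.I * σ * s * (u:ℂ)) * (φ s : ℂ)))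
        = ∫ u in Set.Ioo (-1:ℝ) 1,
            Complex.exp (-Complex.I * σ * u * (t:ℂ)) * (ν * φ u) :=
      integral_congr_ae (by filter_upwards [heig'] with u hu; rw [hu])
    have h2 : (∫ u in Set.Ioo (-1:ℝ) 1,
          Complex.exp (-Complex.I * σ * u * (t:ℂ)) * (ν * φ u))
        = ν * ∫ u in Set.Ioo (-1:ℝ) 1,
            Complex.exp (-Complex.I * σ * u * (t:ℂ)) * (φ u : ℂ) := by
      rw [← integral_const_mul]
      exact integral_congr_ae (Filter.Eventually.of_forall fun u => by ring)
    rw [h1, h2, ht, ← mul_assoc, Complex.mul_conj, ← Complex.sq_norm]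
  -- step 2: Fubini computation
  have hA3 : ∀ t : ℝ,
      (∫ u in Set.Ioo (-1:ℝ) 1, Complex.exp (-Complex.I * σ * u * (t:ℂ)) *
        (∫ s in Set.Ioo (-1:ℝ) 1, Complex.exp (Complex.I * σ * s * (u:ℂ)) * (φ s : ℂ)))
        = ((2 * Real.pi / σ *
            ∫ s in Set.Ioo (-1:ℝ) 1, sincK σ (t - s) * φ s : ℝ) : ℂ) := by
    intro t
    have hInteg : Integrable
        (fun z : ℝ × ℝ => Complex.exp (Complex.I * σ * z.1 * ((z.2 : ℂ) - t)) * (φ z.2 : ℂ))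
        ((volume.restrict (Set.Ioo (-1:ℝ) 1)).prod (volume.restrict (Set.Ioo (-1:ℝ) 1))) := by
      have hm : AEStronglyMeasurable
          (fun z : ℝ × ℝ => Complex.exp (Complex.I * σ * z.1 * ((z.2 : ℂ) - t)) * (φ z.2 : ℂ))
          ((volume.restrict (Set.Ioo (-1:ℝ) 1)).prod (volume.restrict (Set.Ioo (-1:ℝ) 1))) := by
        apply AEStronglyMeasurable.mul
        · apply Continuous.aestronglyMeasurable
          fun_prop
        · exact Complex.continuous_ofReal.comp_aestronglyMeasurable hφm.comp_snd
      refine Integrable.mono' ((integrable_const (1:ℝ)).mul_prod hInt.norm) hm ?_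
      refine Filter.Eventually.of_forall fun z => ?_
      have he : Complex.I * σ * z.1 * ((z.2 : ℂ) - t)
          = ((σ * z.1 * (z.2 - t) : ℝ) : ℂ) * Complex.I := by push_cast; ring
      rw [norm_mul, he,
        Complex.norm_exp_ofReal_mul_I, Complex.norm_real, one_mul]
    have hswap := integral_integral_swap
      (f := fun u s => Complex.exp (Complex.I * σ * u * ((s : ℂ) - t)) * (φ s : ℂ))
      (μ := volume.restrict (Set.Ioo (-1:ℝ) 1)) (ν := volume.restrict (Set.Ioo (-1:ℝ) 1)) hInteg
    have h1 : (∫ u in Set.Ioo (-1:ℝ) 1, Complex.exp (-Complex.I * σ * u * (t:ℂ)) *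
        (∫ s in Set.Ioo (-1:ℝ) 1, Complex.exp (Complex.I * σ * s * (u:ℂ)) * (φ s : ℂ)))
        = ∫ u in Set.Ioo (-1:ℝ) 1, ∫ s in Set.Ioo (-1:ℝ) 1,
            Complex.exp (Complex.I * σ * u * ((s : ℂ) - t)) * (φ s : ℂ) := by
      refine integral_congr_ae (Filter.Eventually.of_forall fun u => ?_)
      dsimp only
      rw [← integral_const_mul]
      refine integral_congr_ae (Filter.Eventually.of_forall fun s => ?_)
      dsimp only
      rw [← mul_assoc, ← Complex.exp_add]
      congr 1
      ring
    rw [h1, hswap]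
    have h2 : ∀ s : ℝ, (∫ u in Set.Ioo (-1:ℝ) 1,
        Complex.exp (Complex.I * σ * u * ((s : ℂ) - t)) * (φ s : ℂ))
        = ((2 * Real.pi / σ : ℝ) : ℂ) * ((sincK σ (t - s) * φ s : ℝ) : ℂ) := by
      intro s
      rw [integral_mul_const]
      have h3 : (∫ u in Set.Ioo (-1:ℝ) 1, Complex.exp (Complex.I * σ * u * ((s : ℂ) - t)))
          = ((2 * Real.pi / σ * sincK σ (s - t) : ℝ) : ℂ) := by
        rw [← exp_int σ hσ (s - t)]
        refine integral_congr_ae (Filter.Eventually.of_forall fun u => ?_)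
        dsimp only
        push_cast
        ring_nf
      rw [h3]
      have h4 : sincK σ (s - t) = sincK σ (t - s) := by
        rw [← sincK_even σ (t - s), neg_sub]
      rw [h4]
      push_cast
      ring
    rw [integral_congr_ae (Filter.Eventually.of_forall h2), integral_const_mul]
    have h5 : (∫ s in Set.Ioo (-1:ℝ) 1, ((sincK σ (t - s) * φ s : ℝ) : ℂ))
        = ((∫ s in Set.Ioo (-1:ℝ) 1, sincK σ (t - s) * φ s : ℝ) : ℂ) := integral_ofReal
    rw [h5]
    push_cast
    ring
  -- conclude
  filter_upwards [hA2] with t ht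
  have key : (2 * Real.pi / σ * ∫ s in Set.Ioo (-1:ℝ) 1, sincK σ (t - s) * φ s : ℝ)
      = ‖ν‖ ^ 2 * φ t := by
    have h := (hA3 t).symm.trans ht
    exact_mod_cast h
  rw [interval_to_Ioo']
  have hπ := Real.pi_pos
  field_simp at key ⊢
  nlinarith [key]
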